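/- arXiv:2406.05524 — 5 statements merged into one kernel-verified Lean document; each statement's English description precedes it below -/
import Mathlib

section
/- Let q be a prime power, let κ = 𝔽_q[T]/(π) be the residue field of 𝔽_q[T] at a monic irreducible polynomial π, let t ∈ κ be the image of T, and let K be an algebraic closure of κ. Let c := t·X + X^q ∈ K[X] be the Carlitz polynomial. If u ∈ K[X] is 𝔽_q-linear (i.e., every monomial occurring in u has degree a power of q, so u = Σ_{i=0}^m a_i X^{q^i}) and u and c commute under composition, u ∘ c = c ∘ u, then there exists a unique polynomial b = Σ_i b_i T^i ∈ 𝔽_q[T] such that u = Σ_i b_i · c^{∘i}, where c^{∘i} denotes the i-fold composition of c with itself (c^{∘0} = X). (In other words, the structure map 𝔽_q[T] → End_{κ̄}(C) of the Carlitz module is an isomorphism.) -/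
open Polynomial Finset

section Aux
variable {K : Type} [Field K] {p e q : ℕ} [hp : Fact p.Prime] [CharP K p]

lemma addpowj (hq : q = p ^ e) (x y : K[X]) (j : ℕ) :
    (x + y) ^ q ^ j = x ^ q ^ j + y ^ q ^ j := by
  subst hq; rw [← pow_mul]; exact add_pow_char_pow ..

lemma subpow (hq : q = p ^ e) (x y : K[X]) : (x - y) ^ q = x ^ q - y ^ q := by
  subst hq; exact sub_pow_char_pow ..

lemma sumpow (hq : q = p ^ e) {ι : Type*} (s : Finset ι) (f : ι → K[X]) :
    (∑ i ∈ s, f i) ^ q = ∑ i ∈ s, f i ^ q := by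
  subst hq; exact sum_pow_char_pow ..

lemma cpowq (hq : q = p ^ e) (t' : K) (j : ℕ) :
    (C t' * X + X ^ q : K[X]) ^ q ^ j
      = C (t' ^ q ^ j) * X ^ q ^ j + X ^ q ^ (j + 1) := by
  rw [addpowj hq, mul_pow, ← C_pow, ← pow_mul, ← pow_succ']

lemma ccomp (t' : K) (w : K[X]) :
    (C t' * X + X ^ q : K[X]).comp w = C t' * w + w ^ q := by
  simp

lemma coeff_lin (hq2 : 2 ≤ q) (N k : ℕ) (a : ℕ → K) :
    (∑ j ∈ Finset.range N, C (a j) * X ^ q ^ j).coeff (q ^ k) =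
      if k < N then a k else 0 := by
  have hiff : ∀ i j : ℕ, (q ^ i = q ^ j) ↔ i = j := fun i j =>
    ⟨fun h => Nat.pow_right_injective hq2 h, fun h => by rw [h]⟩
  rw [finset_sum_coeff]
  simp only [coeff_C_mul, coeff_X_pow, hiff, mul_ite, mul_one, mul_zero]
  rw [Finset.sum_ite_eq (Finset.range N) k a]
  simp [Finset.mem_range]

end Aux
section Aux2
variable {K : Type} [Field K] {p e q : ℕ} [hp : Fact p.Prime] [CharP K p]

lemma iter_comm (t' : K) (m : ℕ) :
    ((fun g : K[X] => g.comp (C t' * X + X ^ q))^[m] X).comp (C t' * X + X ^ q)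
      = (C t' * X + X ^ q).comp ((fun g : K[X] => g.comp (C t' * X + X ^ q))^[m] X) := by
  induction m with
  | zero => simp
  | succ m ih =>
      simp only [Function.iterate_succ_apply']
      rw [← comp_assoc, ← ih]

lemma iter_rep (hq : q = p ^ e) (t' : K) (m : ℕ) :
    ∃ d : ℕ → K,
      (fun g : K[X] => g.comp (C t' * X + X ^ q))^[m] X
        = ∑ j ∈ Finset.range (m + 1), C (d j) * X ^ q ^ j ∧ d m = 1 := by
  induction m with
  | zero =>
      refine ⟨fun _ => 1, ?_, rfl⟩
      simp
  | succ m ih =>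
      obtain ⟨d, hd, hdm⟩ := ih
      refine ⟨fun j => (if j ≤ m then d j * t' ^ q ^ j else 0)
        + (if j = 0 then 0 else d (j - 1)), ?_, by simp [hdm]⟩
      rw [Function.iterate_succ_apply', hd, Polynomial.sum_comp]
      have hterm : ∀ j ∈ Finset.range (m + 1),
          (C (d j) * X ^ q ^ j).comp (C t' * X + X ^ q)
            = C (d j * t' ^ q ^ j) * X ^ q ^ j + C (d j) * X ^ q ^ (j + 1) := by
        intro j _
        rw [mul_comp, C_comp, X_pow_comp, cpowq hq, mul_add, ← mul_assoc, ← C_mul]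
      rw [Finset.sum_congr rfl hterm, Finset.sum_add_distrib]
      have h1 : ∑ j ∈ Finset.range (m + 1 + 1),
          C (if j ≤ m then d j * t' ^ q ^ j else 0) * X ^ q ^ j
          = ∑ j ∈ Finset.range (m + 1), C (d j * t' ^ q ^ j) * X ^ q ^ j := by
        rw [Finset.sum_range_succ, if_neg (by omega)]
        simp only [C_0, zero_mul, add_zero]
        refine Finset.sum_congr rfl fun j hj => ?_
        rw [if_pos (by simpa using Nat.lt_succ_iff.mp (Finset.mem_range.mp hj))]
      have h2 : ∑ j ∈ Finset.range (m + 1 + 1),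
          C (if j = 0 then (0:K) else d (j - 1)) * X ^ q ^ j
          = ∑ j ∈ Finset.range (m + 1), C (d j) * X ^ q ^ (j + 1) := by
        rw [Finset.sum_range_succ']
        simp
      rw [← h1, ← h2, ← Finset.sum_add_distrib]
      exact Finset.sum_congr rfl fun j _ => by rw [C_add, add_mul]

end Aux2
section Aux3
variable {K : Type} [Field K] {p e q : ℕ} [hp : Fact p.Prime] [CharP K p]

lemma top_coeff_fixed (hq : q = p ^ e) (he : 0 < e) (t' : K) (m : ℕ) (a : ℕ → K)
    (u : K[X]) (hu : u = ∑ j ∈ Finset.range (m + 1), C (a j) * X ^ q ^ j)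
    (hcm : u.comp (C t' * X + X ^ q) = (C t' * X + X ^ q).comp u) :
    (a m) ^ q = a m := by
  have hq2 : 2 ≤ q := hq ▸ Nat.one_lt_pow he.ne' hp.out.one_lt
  have hiff : ∀ i j : ℕ, (q ^ i = q ^ j) ↔ i = j := fun i j =>
    ⟨fun h => Nat.pow_right_injective hq2 h, fun h => by rw [h]⟩
  have h1 : (u.comp (C t' * X + X ^ q)).coeff (q ^ (m + 1)) = a m := by
    rw [hu, Polynomial.sum_comp]
    have hterm : ∀ j ∈ Finset.range (m + 1),
        (C (a j) * X ^ q ^ j).comp (C t' * X + X ^ q)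
          = C (a j * t' ^ q ^ j) * X ^ q ^ j + C (a j) * X ^ q ^ (j + 1) := by
      intro j _
      rw [mul_comp, C_comp, X_pow_comp, cpowq hq, mul_add, ← mul_assoc, ← C_mul]
    rw [Finset.sum_congr rfl hterm, finset_sum_coeff]
    simp only [coeff_add, coeff_C_mul, coeff_X_pow, hiff, mul_ite, mul_one, mul_zero,
      Nat.add_right_cancel_iff]
    rw [Finset.sum_add_distrib, Finset.sum_ite_eq (Finset.range (m + 1)) (m + 1),
      Finset.sum_ite_eq (Finset.range (m + 1)) m]
    simp
  have h2 : (((C t' * X + X ^ q : K[X])).comp u).coeff (q ^ (m + 1)) = (a m) ^ q := by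
    rw [ccomp, hu]
    have hpow : (∑ j ∈ Finset.range (m + 1), C (a j) * X ^ q ^ j) ^ q
        = ∑ j ∈ Finset.range (m + 1), C ((a j) ^ q) * X ^ q ^ (j + 1) := by
      rw [sumpow hq]
      refine Finset.sum_congr rfl fun j _ => ?_
      rw [mul_pow, ← C_pow, ← pow_mul, ← pow_succ]
    rw [hpow, coeff_add]
    rw [Finset.mul_sum]
    have : ∀ j ∈ Finset.range (m + 1), C t' * (C (a j) * X ^ q ^ j)
        = C (t' * a j) * X ^ q ^ j := fun j _ => by rw [← mul_assoc, ← C_mul]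
    rw [Finset.sum_congr rfl this, coeff_lin hq2, if_neg (by omega), finset_sum_coeff]
    simp only [coeff_C_mul, coeff_X_pow, hiff, mul_ite, mul_one, mul_zero,
      Nat.add_right_cancel_iff]
    rw [Finset.sum_ite_eq (Finset.range (m + 1)) m]
    simp
  rw [hcm, h2] at h1
  exact h1

end Aux3
section Aux4
variable {K : Type} [Field K] {p e q : ℕ} [hp : Fact p.Prime] [CharP K p]

lemma exist_aux (hq : q = p ^ e) (he : 0 < e) {Fq : Type} [Field Fq]
    (φ : Fq →+* K) (hfix : ∀ x : K, x ^ q = x → ∃ y : Fq, φ y = x) (t' : K) :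
    ∀ m (a : ℕ → K) (u : K[X]),
      u = ∑ j ∈ Finset.range m, C (a j) * X ^ q ^ j →
      u.comp (C t' * X + X ^ q) = (C t' * X + X ^ q).comp u →
      ∃ b : Polynomial Fq, (∀ j, m ≤ j → b.coeff j = 0) ∧
        u = ∑ j ∈ Finset.range m,
          C (φ (b.coeff j)) * ((fun g : K[X] => g.comp (C t' * X + X ^ q))^[j] X) := by
  intro m
  induction m with
  | zero =>
      intro a u hu _
      exact ⟨0, fun j _ => by simp, by simpa using hu⟩
  | succ m ih =>
      intro a u hu hcm
      have hfa : (a m) ^ q = a m := top_coeff_fixed hq he t' m a u hu hcm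
      obtain ⟨y, hy⟩ := hfix (a m) hfa
      obtain ⟨d, hd, hdm⟩ := iter_rep hq t' m
      set c : K[X] := C t' * X + X ^ q with hcdef
      set cm : K[X] := (fun g : K[X] => g.comp c)^[m] X with hcm_def
      set v : K[X] := C (a m) * cm with hv
      -- representation of u - v
      have huv : u - v = ∑ j ∈ Finset.range m, C (a j - a m * d j) * X ^ q ^ j := by
        rw [hu, hv, hd, Finset.mul_sum]
        have : ∀ j ∈ Finset.range (m + 1),
            C (a m) * (C (d j) * X ^ q ^ j) = C (a m * d j) * X ^ q ^ j :=
          fun j _ => by rw [← mul_assoc, ← C_mul]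
        rw [Finset.sum_congr rfl this, ← Finset.sum_sub_distrib]
        have : ∀ j ∈ Finset.range (m + 1),
            C (a j) * X ^ q ^ j - C (a m * d j) * X ^ q ^ j
              = C (a j - a m * d j) * X ^ q ^ j :=
          fun j _ => by rw [← sub_mul, ← C_sub]
        rw [Finset.sum_congr rfl this, Finset.sum_range_succ, hdm]
        simp
      -- v commutes with c
      have hvc : v.comp c = C (a m) * ((fun g : K[X] => g.comp c)^[m + 1] X) := by
        rw [hv, mul_comp, C_comp, Function.iterate_succ_apply']
      have hccomp : ∀ w : K[X], c.comp w = C t' * w + w ^ q := fun w => by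
        rw [hcdef]; exact ccomp t' w
      have hccm : c.comp cm = cm.comp c := by
        rw [hcm_def, hcdef]; exact (iter_comm t' m).symm
      have hcv : c.comp v = C (a m) * ((fun g : K[X] => g.comp c)^[m + 1] X) := by
        rw [hccomp, hv, mul_pow, ← C_pow, hfa, Function.iterate_succ_apply',
          ← hcm_def, ← hccm, hccomp]
        ring
      have hcomm' : (u - v).comp c = c.comp (u - v) := by
        rw [sub_comp, hcm, hvc, ← hcv, hccomp u, hccomp v, hccomp (u - v), subpow hq]
        ring
      obtain ⟨b', hb'0, hb'⟩ := ih (fun j => a j - a m * d j) (u - v) huv hcomm'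
      refine ⟨b' + Polynomial.monomial m y, fun j hj => ?_, ?_⟩
      · rw [coeff_add, hb'0 j (by omega), coeff_monomial, if_neg (by omega)]
        simp
      · rw [Finset.sum_range_succ]
        have hcoeffm : (b' + Polynomial.monomial m y).coeff m = y := by
          rw [coeff_add, hb'0 m le_rfl, coeff_monomial, if_pos rfl, zero_add]
        have hcoeffj : ∀ j ∈ Finset.range m,
            C (φ ((b' + Polynomial.monomial m y).coeff j)) * ((fun g : K[X] => g.comp c)^[j] X)
              = C (φ (b'.coeff j)) * ((fun g : K[X] => g.comp c)^[j] X) := by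
          intro j hj
          rw [coeff_add, coeff_monomial, if_neg (by simp at hj; omega), add_zero]
        rw [Finset.sum_congr rfl hcoeffj, ← hb', hcoeffm, hy, ← hcm_def, ← hv]
        ring

end Aux4
section Aux5
variable {K : Type} [Field K] {p e q : ℕ} [hp : Fact p.Prime] [CharP K p]

lemma fixed_field (hq2 : 2 ≤ q) {Fq : Type} [Field Fq] [Fintype Fq]
    (hcard : Fintype.card Fq = q) (φ : Fq →+* K) :
    ∀ x : K, x ^ q = x → ∃ y : Fq, φ y = x := by
  classical
  intro x hx
  have hdeg : (X ^ q - X : K[X]).natDegree = q := by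
    rw [natDegree_sub_eq_left_of_natDegree_lt (by simp; omega), natDegree_X_pow]
  have hPne : (X ^ q - X : K[X]) ≠ 0 := fun h => by
    rw [h] at hdeg; simp at hdeg; omega
  set s : Finset K := Finset.univ.image (fun y : Fq => φ y) with hs
  have hsub : s ⊆ (X ^ q - X : K[X]).roots.toFinset := by
    intro z hz
    rw [hs, Finset.mem_image] at hz
    obtain ⟨y, -, rfl⟩ := hz
    rw [Multiset.mem_toFinset, mem_roots hPne]
    have : y ^ q = y := by rw [← hcard]; exact FiniteField.pow_card y
    simp [IsRoot, ← map_pow, this]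
  have hcards : s.card = q := by
    rw [hs, Finset.card_image_of_injective _ φ.injective, Finset.card_univ, hcard]
  have hle : (X ^ q - X : K[X]).roots.toFinset.card ≤ q :=
    le_trans (Multiset.toFinset_card_le _) (le_trans (card_roots' _) (le_of_eq hdeg))
  have heq : s = (X ^ q - X : K[X]).roots.toFinset :=
    Finset.eq_of_subset_of_card_le hsub (by omega)
  have hxmem : x ∈ (X ^ q - X : K[X]).roots.toFinset := by
    rw [Multiset.mem_toFinset, mem_roots hPne]
    simp [IsRoot, hx]
  rw [← heq, hs, Finset.mem_image] at hxmem
  obtain ⟨y, -, hy⟩ := hxmem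
  exact ⟨y, hy⟩

lemma rep_injective (hq : q = p ^ e) (he : 0 < e) {Fq : Type} [Field Fq]
    (φ : Fq →+* K) (t' : K) (b : Polynomial Fq) (N : ℕ) (hN : b.natDegree < N)
    (h0 : ∑ j ∈ Finset.range N,
      C (φ (b.coeff j)) * ((fun g : K[X] => g.comp (C t' * X + X ^ q))^[j] X) = 0) :
    b = 0 := by
  have hq2 : 2 ≤ q := hq ▸ Nat.one_lt_pow he.ne' hp.out.one_lt
  set n := b.natDegree with hn
  have hco := congrArg (fun f : K[X] => f.coeff (q ^ n)) h0
  simp only [finset_sum_coeff, coeff_C_mul, coeff_zero] at hco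
  rw [Finset.sum_eq_single_of_mem n (Finset.mem_range.mpr hN)] at hco
  · obtain ⟨d, hd, hdn⟩ := iter_rep hq t' n
    rw [hd, coeff_lin hq2, if_pos (by omega), hdn, mul_one] at hco
    have : b.coeff n = 0 := by
      have := φ.injective (by rw [hco, map_zero] : φ (b.coeff n) = φ 0)
      exact this
    exact leadingCoeff_eq_zero.mp this
  · intro j hj hjn
    rcases lt_or_gt_of_ne hjn with h | h
    · obtain ⟨d, hd, -⟩ := iter_rep hq t' j
      rw [hd, coeff_lin hq2, if_neg (by omega), mul_zero]
    · rw [coeff_eq_zero_of_natDegree_lt (by omega), map_zero, zero_mul]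

lemma sum_stable {Fq : Type} [Field Fq] (φ : Fq →+* K) (c : K[X])
    (b : Polynomial Fq) {N : ℕ} (hN : b.natDegree < N) :
    ∑ j ∈ Finset.range N, C (φ (b.coeff j)) * ((fun g : K[X] => g.comp c)^[j] X)
      = ∑ j ∈ Finset.range (b.natDegree + 1),
          C (φ (b.coeff j)) * ((fun g : K[X] => g.comp c)^[j] X) := by
  refine (Finset.sum_subset (Finset.range_subset_range.mpr hN) ?_).symm
  intro j hj hnj
  have : b.coeff j = 0 := coeff_eq_zero_of_natDegree_lt
    (by simp only [Finset.mem_range] at hj hnj; omega)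
  simp [this]

end Aux5

/-- The structure map `𝔽_q[T] → End_{κ̄}(C)` of the Carlitz module is an isomorphism:
every 𝔽_q-linear polynomial over an algebraic closure `K` of the residue field
`κ = 𝔽_q[T]/(π)` commuting with the Carlitz polynomial `c = t·X + X^q` is of the form
`Σ b_i c^{∘i}` for a unique `b ∈ 𝔽_q[T]`. -/
theorem stmt_0 (p e q : ℕ) (hp : p.Prime) (he : 0 < e) (hq : q = p ^ e)
    (Fq : Type) [Field Fq] [Fintype Fq] (hcard : Fintype.card Fq = q)
    (π : Polynomial Fq) (hmonic : π.Monic) (hirr : Irreducible π)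
    (κ : Type) [Field κ] (res : Polynomial Fq →+* κ) (hres : Function.Surjective res)
    (hker : RingHom.ker res = Ideal.span {π})
    (K : Type) [Field K] [Algebra κ K] [IsAlgClosure κ K]
    (t : κ) (ht : t = res X)
    (c : Polynomial K) (hc : c = C (algebraMap κ K t) * X + X ^ q)
    (u : Polynomial K)
    (hlin : ∃ (m : ℕ) (a : ℕ → K),
      u = ∑ j ∈ Finset.range (m + 1), C (a j) * X ^ q ^ j)
    (hcomm : u.comp c = c.comp u) :
    ∃! b : Polynomial Fq,
      u = ∑ j ∈ Finset.range (b.natDegree + 1),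
        C (algebraMap κ K (res (C (b.coeff j)))) * ((fun g => g.comp c)^[j] X) := by
  haveI hpf : Fact p.Prime := ⟨hp⟩
  have hq2 : 2 ≤ q := hq ▸ Nat.one_lt_pow he.ne' hp.one_lt
  -- the embedding Fq → K
  set φ : Fq →+* K := (algebraMap κ K).comp (res.comp Polynomial.C) with hφ
  have hφapp : ∀ x : Fq, φ x = algebraMap κ K (res (Polynomial.C x)) := fun x => rfl
  -- characteristic
  haveI hchFq : CharP Fq p := by
    have h0 : ((q : ℕ) : Fq) = 0 := by rw [← hcard]; exact FiniteField.cast_card_eq_zero Fq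
    rw [hq] at h0
    push_cast at h0
    have hp0 : (p : Fq) = 0 := pow_eq_zero_iff he.ne' |>.mp h0
    exact (CharP.charP_iff_prime_eq_zero hp).mpr hp0
  haveI hchK : CharP K p := charP_of_injective_ringHom φ.injective p
  have hfix : ∀ x : K, x ^ q = x → ∃ y : Fq, φ y = x := fixed_field hq2 hcard φ
  subst hc
  set t' : K := algebraMap κ K t with ht'
  obtain ⟨m, a, hu⟩ := hlin
  obtain ⟨b, hb0, hb⟩ := exist_aux hq he φ hfix t' (m + 1) a u hu hcomm
  have hdegb : b.natDegree ≤ m := natDegree_le_iff_coeff_eq_zero.mpr fun N hN => hb0 N (by omega)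
  refine ⟨b, ?_, ?_⟩
  · rw [hb, sum_stable φ _ b (by omega)]
    rfl
  · intro y hy
    simp only [← hφapp] at hy
    set N : ℕ := max y.natDegree b.natDegree + 1 with hN
    have hSb : ∑ j ∈ Finset.range N,
        C (φ (b.coeff j)) * ((fun g : K[X] => g.comp (C t' * X + X ^ q))^[j] X) = u := by
      rw [sum_stable φ _ b (by omega : b.natDegree < N),
        ← sum_stable φ _ b (by omega : b.natDegree < m + 1)]
      exact hb.symm
    have hSy : ∑ j ∈ Finset.range N,
        C (φ (y.coeff j)) * ((fun g : K[X] => g.comp (C t' * X + X ^ q))^[j] X) = u := by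
      rw [sum_stable φ _ y (by omega : y.natDegree < N)]
      exact hy.symm
    have hrep : ∑ j ∈ Finset.range N,
        C (φ ((y - b).coeff j)) * ((fun g : K[X] => g.comp (C t' * X + X ^ q))^[j] X) = 0 := by
      simp only [coeff_sub, map_sub, C_sub, sub_mul, Finset.sum_sub_distrib]
      rw [hSy, hSb, sub_self]
    have : y - b = 0 := rep_injective hq he φ t' (y - b) N
      (lt_of_le_of_lt (natDegree_sub_le y b) (by omega)) hrep
    exact sub_eq_zero.mp this
end

section
/- Let q be a prime power, let K be a field of characteristic p containing 𝔽_q, let t ∈ K, and set c := t·X + X^q ∈ K[X]. Suppose u = Σ_{i=0}^m a_i X^{q^i} ∈ K[X] with a_m ≠ 0 satisfies u ∘ c = c ∘ u (composition of polynomials). Then the leading coefficient satisfies a_m^q = a_m, i.e., a_m ∈ 𝔽_q. -/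
open Polynomial

/-- If an 𝔽_q-linear polynomial `u = Σ_{i≤m} a_i X^{q^i}` over a field `K` of
characteristic `p` containing `𝔽_q` commutes (under composition) with
`c = t·X + X^q`, then its leading coefficient satisfies `a_m^q = a_m`,
i.e. lies in `𝔽_q`. -/
theorem stmt_1 (p e q : ℕ) (hp : p.Prime) (he : 0 < e) (hq : q = p ^ e)
    (Fq : Type) [Field Fq] [Fintype Fq] (hcard : Fintype.card Fq = q)
    (K : Type) [Field K] [CharP K p] [Algebra Fq K]
    (t : K) (c : Polynomial K) (hc : c = C t * X + X ^ q)
    (m : ℕ) (a : ℕ → K) (ha : a m ≠ 0)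
    (u : Polynomial K) (hu : u = ∑ j ∈ Finset.range (m + 1), C (a j) * X ^ q ^ j)
    (hcomm : u.comp c = c.comp u) :
    a m ^ q = a m := by
  haveI : Fact p.Prime := ⟨hp⟩
  have hq1 : 1 < q := by
    subst hq; exact Nat.one_lt_pow he.ne' hp.one_lt
  set N := q ^ (m + 1) with hN
  have hpow : ∀ j : ℕ, q ^ j = p ^ (e * j) := by
    intro j; rw [hq, ← pow_mul]
  have hlt : ∀ j : ℕ, j ≤ m → q ^ j ≠ N := by
    intro j hj
    exact ne_of_lt (Nat.pow_lt_pow_right hq1 (by omega))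
  -- compute c ^ (q ^ j)
  have hcj : ∀ j : ℕ, c ^ q ^ j = C (t ^ q ^ j) * X ^ q ^ j + X ^ q ^ (j + 1) := by
    intro j
    rw [hc, hpow j, add_pow_char_pow, ← hpow j, mul_pow, ← C_pow, ← pow_mul,
      ← pow_succ']
  -- left coefficient
  have hL : (u.comp c).coeff N = a m := by
    have hcomp : u.comp c =
        ∑ j ∈ Finset.range (m + 1),
          C (a j) * (C (t ^ q ^ j) * X ^ q ^ j + X ^ q ^ (j + 1)) := by
      rw [hu, Polynomial.comp, eval₂_finset_sum]
      refine Finset.sum_congr rfl fun j _ => ?_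
      rw [eval₂_mul, eval₂_C, eval₂_X_pow, hcj j]
    rw [hcomp, finset_sum_coeff]
    rw [Finset.sum_eq_single m]
    · have h1 : q ^ m ≠ N := hlt m le_rfl
      simp [coeff_C_mul, coeff_add, coeff_X_pow, -map_pow, h1, Ne.symm h1]
      exact fun h => absurd hN h
    · intro j hj hjm
      have hj' : j < m := by
        have := Finset.mem_range.mp hj; omega
      have h1 : q ^ j ≠ N := hlt j hj'.le
      have h2 : q ^ (j + 1) ≠ N := hlt (j + 1) (by omega)
      simp [coeff_C_mul, coeff_add, coeff_X_pow, -map_pow, h1, Ne.symm h1, h2, Ne.symm h2]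
    · intro h; exact absurd (Finset.self_mem_range_succ m) h
  -- right coefficient
  have huN : u.coeff N = 0 := by
    rw [hu, finset_sum_coeff]
    refine Finset.sum_eq_zero fun j hj => ?_
    have h1 : q ^ j ≠ N := hlt j (by have := Finset.mem_range.mp hj; omega)
    simp [coeff_C_mul, coeff_X_pow, h1, Ne.symm h1]
  have huq : u ^ q = ∑ j ∈ Finset.range (m + 1), C (a j ^ q) * X ^ q ^ (j + 1) := by
    rw [hu, hq, ← pow_one (p ^ e), ← hq]
    rw [show (q : ℕ) ^ 1 = p ^ (e * 1) by rw [hpow]]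
    rw [sum_pow_char_pow]
    refine Finset.sum_congr rfl fun j _ => ?_
    rw [← hpow 1, pow_one, mul_pow, ← C_pow, ← pow_mul, ← pow_succ]
  have hR : (c.comp u).coeff N = a m ^ q := by
    rw [hc, add_comp, mul_comp, C_comp, X_comp, X_pow_comp, coeff_add,
      coeff_C_mul, huN, mul_zero, zero_add, huq, finset_sum_coeff]
    rw [Finset.sum_eq_single m]
    · simp [coeff_C_mul, coeff_X_pow, -map_pow, hN]
    · intro j hj hjm
      have hj' : j < m := by
        have := Finset.mem_range.mp hj; omega
      have h2 : q ^ (j + 1) ≠ N := hlt (j + 1) (by omega)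
      simp [coeff_C_mul, coeff_X_pow, -map_pow, h2, Ne.symm h2]
    · intro h; exact absurd (Finset.self_mem_range_succ m) h
  rw [← hR, ← hcomm, hL]
end

section
/- Let q be a prime power, let r ≥ 2 be an integer, let c ∈ 𝔽_q, let 𝔽̄_q be an algebraic closure of 𝔽_q, and let L := 𝔽̄_q((t)) be the field of formal Laurent series over 𝔽̄_q. Set T := t⁻¹ ∈ L. Then the polynomial G(Y) := Y + (T − c)⁻¹·Y^q + Y^{q^r} ∈ L[Y] splits completely over L, i.e., G factors into linear factors in L[Y]. -/
open Polynomial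

section Henselian

variable {K : Type} [Field K]

private lemma mem_span_X_pow {n : ℕ} {f : PowerSeries K} :
    f ∈ (Ideal.span {PowerSeries.X} : Ideal (PowerSeries K)) ^ n ↔
      ∀ m < n, PowerSeries.coeff m f = 0 := by
  rw [Ideal.span_singleton_pow, Ideal.mem_span_singleton, PowerSeries.X_pow_dvd_iff]

private lemma smul_top_eq (n : ℕ) :
    ((Ideal.span {PowerSeries.X} : Ideal (PowerSeries K)) ^ n • ⊤ : Ideal (PowerSeries K)) =
      (Ideal.span {PowerSeries.X} : Ideal (PowerSeries K)) ^ n := by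
  rw [← Ideal.one_eq_top, Ideal.smul_eq_mul, mul_one]

instance psAdicComplete :
    IsAdicComplete (Ideal.span {PowerSeries.X} : Ideal (PowerSeries K)) (PowerSeries K) where
  haus' x hx := by
    ext n
    have := hx (n + 1)
    rw [SModEq.zero, smul_top_eq, mem_span_X_pow] at this
    simpa using this n (Nat.lt_succ_self n)
  prec' f hf := by
    refine ⟨PowerSeries.mk fun n => PowerSeries.coeff n (f (n + 1)), fun n => ?_⟩
    rw [SModEq.sub_mem, smul_top_eq, mem_span_X_pow]
    intro m hm
    have := hf (show m + 1 ≤ n from hm)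
    rw [SModEq.sub_mem, smul_top_eq, mem_span_X_pow] at this
    have h2 := this m (Nat.lt_succ_self m)
    rw [map_sub] at h2 ⊢
    simp only [PowerSeries.coeff_mk]
    rw [sub_eq_zero] at h2 ⊢
    exact h2.symm

instance psHenselian : HenselianLocalRing (PowerSeries K) where
  is_henselian f hf a₀ h₁ h₂ := by
    obtain ⟨a, ha1, ha2⟩ :=
      (IsAdicComplete.henselianRing (PowerSeries K)
        (Ideal.span {PowerSeries.X})).is_henselian f hf a₀
        (by rwa [PowerSeries.maximalIdeal_eq_span_X] at h₁)
        (h₂.map (Ideal.Quotient.mk _))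
    exact ⟨a, ha1, by rwa [PowerSeries.maximalIdeal_eq_span_X]⟩

end Henselian

open Polynomial

private lemma splits_aux {K : Type} [Field K] [IsAlgClosed K] :
    ∀ (n : ℕ) (f : Polynomial (PowerSeries K)), f.natDegree = n → f.Monic →
      (f.map (PowerSeries.constantCoeff (R := K))).Separable →
      (f.map (HahnSeries.ofPowerSeries ℤ K : PowerSeries K →+* LaurentSeries K)).Splits := by
  intro n
  induction n with
  | zero =>
    intro f hdeg hmonic _
    rw [hmonic.natDegree_eq_zero.mp hdeg, Polynomial.map_one]
    exact Splits.one
  | succ n ih =>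
    intro f hdeg hmonic hsep
    set σ := PowerSeries.constantCoeff (R := K) with hσ
    set fbar := f.map σ with hfbar
    have hfbne : fbar ≠ 0 := (hmonic.map σ).ne_zero
    have hfbdeg : fbar.degree = ((n + 1 : ℕ) : WithBot ℕ) := by
      rw [degree_eq_natDegree hfbne, hmonic.natDegree_map, hdeg]
    obtain ⟨b, hb⟩ := IsAlgClosed.exists_root fbar (by rw [hfbdeg]; exact_mod_cast n.succ_ne_zero)
    have hconst : ∀ g : Polynomial (PowerSeries K),
        σ (g.eval (PowerSeries.C b)) = (g.map σ).eval b := by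
      intro g
      have h1 : σ (g.eval (PowerSeries.C b)) = g.eval₂ σ (σ (PowerSeries.C b)) :=
        (Polynomial.eval₂_at_apply σ _).symm
      rw [eval_map, h1, PowerSeries.constantCoeff_C]
    have hder : (fbar.derivative).eval b ≠ 0 := by
      have := hsep.aeval_derivative_ne_zero (S := K) (x := b) (by simpa using hb)
      simpa using this
    have h₁ : f.eval (PowerSeries.C b) ∈ IsLocalRing.maximalIdeal (PowerSeries K) := by
      rw [← PowerSeries.ker_coeff_eq_max_ideal, RingHom.mem_ker, hconst]
      exact hb
    have h₂ : IsUnit (f.derivative.eval (PowerSeries.C b)) := by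
      rw [PowerSeries.isUnit_iff_constantCoeff]
      rw [hconst, derivative_map] at *
      exact (Ne.isUnit hder)
    obtain ⟨a, haroot, -⟩ := HenselianLocalRing.is_henselian f hmonic (PowerSeries.C b) h₁ h₂
    obtain ⟨g, hg⟩ := Polynomial.dvd_iff_isRoot.mpr haroot
    have hgmonic : g.Monic := (monic_X_sub_C a).of_mul_monic_left (hg ▸ hmonic)
    have hgdeg : g.natDegree = n := by
      have h := hdeg
      rw [hg, (monic_X_sub_C a).natDegree_mul hgmonic, natDegree_X_sub_C] at h
      omega
    have hgsep : (g.map σ).Separable := by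
      refine hsep.of_dvd ?_
      rw [hfbar, hg, Polynomial.map_mul]
      exact Dvd.intro_left _ rfl
    have hsplit := ih g hgdeg hgmonic hgsep
    rw [hg, Polynomial.map_mul]
    refine Splits.mul ?_ hsplit
    rw [Polynomial.map_sub, Polynomial.map_X, Polynomial.map_C]
    exact Splits.X_sub_C _


/-- Over the Laurent series field `L = 𝔽̄_q((t))`, with `T = t⁻¹`, the polynomial
`G(Y) = Y + (T−c)⁻¹·Y^q + Y^{q^r}` splits completely. This expresses that all
`(T−c)`-torsion of the Drinfeld module `φ_T = T + τ + (T−c)τ^r` lies in the maximal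
unramified extension of `F_∞`. -/
theorem stmt_6 (p k q : ℕ) (hp : p.Prime) (hk : 0 < k) (hq : q = p ^ k)
    (Fq : Type) [Field Fq] [Fintype Fq] (hcard : Fintype.card Fq = q)
    (r : ℕ) (hr : 2 ≤ r) (c : Fq)
    (t T : LaurentSeries (AlgebraicClosure Fq))
    (ht : t = HahnSeries.single (1 : ℤ) 1) (hT : T = t⁻¹)
    (G : Polynomial (LaurentSeries (AlgebraicClosure Fq)))
    (hG : G = X + C ((T - HahnSeries.C (algebraMap Fq (AlgebraicClosure Fq) c))⁻¹) * X ^ q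
      + X ^ q ^ r) :
    G.Splits := by
  set K := AlgebraicClosure Fq
  set cc : K := algebraMap Fq K c with hcc
  set Φ : PowerSeries K →+* LaurentSeries K := HahnSeries.ofPowerSeries ℤ K with hΦ
  set u : PowerSeries K := 1 - PowerSeries.C cc * PowerSeries.X with hu
  have hu0 : PowerSeries.constantCoeff u ≠ 0 := by
    simp [hu]
  set a' : PowerSeries K := PowerSeries.X * u⁻¹ with ha'
  -- basic facts
  have h2q : 2 ≤ q := by
    rw [hq]
    exact Nat.one_lt_pow (by omega) hp.two_le
  have htne : t ≠ 0 := by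
    rw [ht]
    exact HahnSeries.single_ne_zero one_ne_zero
  have hΦX : Φ PowerSeries.X = t := by
    rw [hΦ, HahnSeries.ofPowerSeries_X, ht]
  have hΦu : Φ u = 1 - HahnSeries.C cc * t := by
    rw [hu, map_sub, map_one, map_mul, HahnSeries.ofPowerSeries_C, hΦX]
  -- step A : Φ a' is the inverse of T - C cc
  have hkey : Φ a' = (T - HahnSeries.C cc)⁻¹ := by
    refine (inv_eq_of_mul_eq_one_right ?_).symm
    rw [ha', map_mul, hΦX, hT]
    calc (t⁻¹ - HahnSeries.C cc) * (t * Φ u⁻¹)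
        = (t⁻¹ * t - HahnSeries.C cc * t) * Φ u⁻¹ := by ring
      _ = (1 - HahnSeries.C cc * t) * Φ u⁻¹ := by rw [inv_mul_cancel₀ htne]
      _ = Φ u * Φ u⁻¹ := by rw [hΦu]
      _ = 1 := by rw [← map_mul, PowerSeries.mul_inv_cancel u hu0, map_one]
  -- the integral model g
  set g : Polynomial (PowerSeries K) := X + Polynomial.C a' * X ^ q + X ^ q ^ r with hg
  have hmapg : g.map Φ = G := by
    rw [hg, hG]
    simp only [Polynomial.map_add, Polynomial.map_mul, Polynomial.map_pow, Polynomial.map_X,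
      Polynomial.map_C, hkey]
  have hlowdeg : (X + Polynomial.C a' * X ^ q : Polynomial (PowerSeries K)).degree
      < ((q ^ r : ℕ) : WithBot ℕ) := by
    refine lt_of_le_of_lt (degree_add_le _ _) ?_
    rw [max_lt_iff]
    constructor
    · rw [degree_X]
      exact_mod_cast Nat.one_lt_pow (show r ≠ 0 by omega) (show 1 < q by omega)
    · refine lt_of_le_of_lt (degree_C_mul_X_pow_le _ _) ?_
      exact_mod_cast calc q = q ^ 1 := (pow_one q).symm
        _ < q ^ r := Nat.pow_lt_pow_right (by omega) (by omega)
  have hgmonic : g.Monic := by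
    rw [hg, add_comm]
    exact monic_X_pow_add hlowdeg
  have hσa' : PowerSeries.constantCoeff a' = 0 := by
    rw [ha', map_mul, PowerSeries.constantCoeff_X, zero_mul]
  have hq0 : ((q ^ r : ℕ) : K) = 0 := by
    have h1 : ((Fintype.card Fq : Fq) : Fq) = 0 := FiniteField.cast_card_eq_zero Fq
    have h2 : ((q : ℕ) : K) = 0 := by
      have := congrArg (algebraMap Fq K) (hcard ▸ h1)
      rwa [map_natCast, map_zero] at this
    rw [Nat.cast_pow, h2, zero_pow (by omega)]
  have hgsep : (g.map (PowerSeries.constantCoeff (R := K))).Separable := by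
    have hmap : g.map (PowerSeries.constantCoeff (R := K)) = X + X ^ q ^ r := by
      rw [hg]
      simp only [Polynomial.map_add, Polynomial.map_mul, Polynomial.map_pow, Polynomial.map_X,
        Polynomial.map_C, hσa', map_zero, Polynomial.C_0, zero_mul, add_zero]
    rw [hmap, Polynomial.separable_def]
    have hder : Polynomial.derivative (X + X ^ q ^ r : Polynomial K) = 1 := by
      rw [derivative_add, derivative_X, derivative_X_pow, hq0, Polynomial.C_0, zero_mul, add_zero]
    rw [hder]
    exact isCoprime_one_right
  rw [← hmapg]
  exact splits_aux g.natDegree g rfl hgmonic hgsep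
end

section
/- Let q be a prime power, let r ≥ 2 be an integer, let c ∈ 𝔽_q, let 𝔽̄_q be an algebraic closure of 𝔽_q, and let L := 𝔽̄_q((t)) be the field of formal Laurent series over 𝔽̄_q. Set T := t⁻¹ ∈ L and h(Y) := (T − c)·Y + Y^q + (T − c)·Y^{q^r} ∈ L[Y]. Then for every integer k ≥ 1, the k-fold composition h^{∘k} splits completely over L, i.e., h^{∘k} factors into linear factors in L[Y]. -/
set_option maxHeartbeats 1000000
set_option synthInstance.maxHeartbeats 400000
open Polynomial

variable {K : Type*} [Field K]

lemma mem_aux (n : ℕ) (x : PowerSeries K) :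
    x ∈ ((Ideal.span {PowerSeries.X} : Ideal (PowerSeries K)) ^ n • ⊤ :
        Submodule (PowerSeries K) (PowerSeries K)) ↔
      ∀ m < n, PowerSeries.coeff m x = 0 := by
  rw [smul_eq_mul, Ideal.mul_top, Ideal.span_singleton_pow, Ideal.mem_span_singleton,
    PowerSeries.X_pow_dvd_iff]

lemma adicComplete_aux : IsAdicComplete (Ideal.span {PowerSeries.X} : Ideal (PowerSeries K))
    (PowerSeries K) := by
  refine { toIsHausdorff := ⟨?_⟩, toIsPrecomplete := ⟨?_⟩ }
  · intro x hx
    ext m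
    have := hx (m + 1)
    rw [SModEq.zero, mem_aux] at this
    simpa using this m (Nat.lt_succ_self m)
  · intro f hf
    refine ⟨PowerSeries.mk (fun n => PowerSeries.coeff n (f (n + 1))), fun n => ?_⟩
    rw [SModEq.sub_mem, mem_aux]
    intro m hm
    have h1 := hf (show m + 1 ≤ n from hm)
    rw [SModEq.sub_mem, mem_aux] at h1
    have h2 := h1 m (Nat.lt_succ_self m)
    simp only [map_sub, PowerSeries.coeff_mk] at h2 ⊢
    linear_combination -h2

lemma hensel_root (q N : ℕ) (hqN : q < N) (hq : 0 < q) (hqK : (q : K) = 0) (hNK : (N : K) = 0)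
    (b d : PowerSeries K) (hb : PowerSeries.constantCoeff b = 0)
    (hd : PowerSeries.constantCoeff d = 0) (α : K) (hα : α ^ N + α = 0) :
    ∃ a : PowerSeries K,
      (X ^ N + C b * X ^ q + X + C d : Polynomial (PowerSeries K)).IsRoot a ∧
        PowerSeries.constantCoeff a = α := by
  haveI := (adicComplete_aux (K := K))
  set I : Ideal (PowerSeries K) := Ideal.span {PowerSeries.X} with hI
  set G : Polynomial (PowerSeries K) := X ^ N + C b * X ^ q + X + C d with hG
  have hmonic : G.Monic := by
    have : G = X ^ N + (C b * X ^ q + X + C d) := by ring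
    rw [this]
    apply monic_X_pow_add
    have h1 : (C b * X ^ q + X + C d : Polynomial (PowerSeries K)).degree ≤ (q : WithBot ℕ) := by
      refine le_trans (degree_add_le _ _) (max_le (le_trans (degree_add_le _ _) (max_le ?_ ?_)) ?_)
      · exact le_trans (degree_C_mul_X_pow_le _ _) le_rfl
      · exact le_trans degree_X_le (by exact_mod_cast Nat.one_le_cast.mpr hq)
      · exact le_trans degree_C_le (by exact_mod_cast Nat.cast_nonneg q)
    exact lt_of_le_of_lt h1 (by exact_mod_cast hqN)
  have heval : G.eval (PowerSeries.C α) ∈ I := by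
    rw [hI, Ideal.mem_span_singleton, PowerSeries.X_dvd_iff]
    simp [hG, hb, hd, ← map_pow, hα]
  have hderiv : IsUnit (Ideal.Quotient.mk I (G.derivative.eval (PowerSeries.C α))) := by
    have hN0 : (N : PowerSeries K) = 0 := by
      rw [← map_natCast (PowerSeries.C : K →+* PowerSeries K) N, hNK, map_zero]
    have hq0 : (q : PowerSeries K) = 0 := by
      rw [← map_natCast (PowerSeries.C : K →+* PowerSeries K) q, hqK, map_zero]
    have hdG : G.derivative = 1 := by
      simp [hG, derivative_X_pow, hN0, hq0]
    rw [hdG]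
    simp
  obtain ⟨a, ha, haI⟩ := HenselianRing.is_henselian G hmonic (PowerSeries.C α) heval hderiv
  refine ⟨a, ha, ?_⟩
  rw [hI, Ideal.mem_span_singleton, PowerSeries.X_dvd_iff, map_sub] at haI
  simpa [PowerSeries.constantCoeff_C] using sub_eq_zero.mp haI

lemma splits_aux_s8 (K : Type) [Field K] [IsAlgClosed K] (q r : ℕ) (hq2 : 2 ≤ q) (hr : 2 ≤ r)
    (hqK : (q : K) = 0) (c : K) (w : PowerSeries K) :
    let φ := algebraMap (PowerSeries K) (LaurentSeries K)
    let t : LaurentSeries K := HahnSeries.single (1 : ℤ) 1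
    let a : LaurentSeries K := t⁻¹ - (HahnSeries.C c : LaurentSeries K)
    let P : Polynomial (LaurentSeries K) :=
      C a * X + X ^ q + C a * X ^ q ^ r - C (φ w)
    P.Splits ∧ ∀ y, P.IsRoot y → y ∈ Set.range φ := by
  intro φ t a P
  classical
  set N := q ^ r with hN
  have hqN : q < N := by
    calc q = q ^ 1 := (pow_one q).symm
    _ < q ^ r := Nat.pow_lt_pow_right (by omega) (by omega)
  have hNpos : 0 < N := by positivity
  have hNK : (N : K) = 0 := by
    rw [hN]; push_cast [hqK]; exact zero_pow (by omega)
  -- basic facts about t, φ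
  have ht0 : t ≠ 0 := HahnSeries.single_ne_zero one_ne_zero
  have htt : t * t⁻¹ = 1 := mul_inv_cancel₀ ht0
  have hφX : φ PowerSeries.X = t := by
    rw [LaurentSeries.coe_algebraMap]; exact HahnSeries.ofPowerSeries_X
  have hφC : ∀ x : K, φ (PowerSeries.C x) = HahnSeries.C x := by
    intro x; rw [LaurentSeries.coe_algebraMap]; exact HahnSeries.ofPowerSeries_C x
  have hφinj : Function.Injective φ := by
    rw [LaurentSeries.coe_algebraMap]; exact HahnSeries.ofPowerSeries_injective
  -- the unit u and its inverse
  set u : PowerSeries K := 1 - PowerSeries.C c * PowerSeries.X with hu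
  have huu : IsUnit u := by
    rw [PowerSeries.isUnit_iff_constantCoeff]
    simp [hu]
  set v : PowerSeries K := Ring.inverse u with hv
  have huv : u * v = 1 := Ring.mul_inverse_cancel u huu
  set b : PowerSeries K := v * PowerSeries.X with hb
  set d : PowerSeries K := -(v * (PowerSeries.X * w)) with hd
  have hccb : PowerSeries.constantCoeff b = 0 := by simp [hb]
  have hccd : PowerSeries.constantCoeff d = 0 := by simp [hd]
  set G : Polynomial (PowerSeries K) := X ^ N + C b * X ^ q + X + C d with hG
  -- scalar identities
  have e1 : t * a = φ u := by
    simp only [hu, map_sub, map_one, map_mul, hφX, hφC]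
    rw [mul_sub, htt]
    ring
  have e2 : φ u * φ b = t := by
    rw [← map_mul, hb, ← mul_assoc, huv, one_mul, hφX]
  have e3 : φ u * φ d = -(t * φ w) := by
    rw [← map_mul, hd, mul_neg, ← mul_assoc, ← mul_assoc, huv, one_mul, map_neg, map_mul, hφX]
  -- the key polynomial identity
  have hPmul : C t * P = C (φ u) * G.map (φ : PowerSeries K →+* LaurentSeries K) := by
    have E1 : (C t : Polynomial (LaurentSeries K)) * C a = C (φ u) := by rw [← C_mul, e1]
    have E2 : (C (φ u) : Polynomial (LaurentSeries K)) * C (φ b) = C t := by rw [← C_mul, e2]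
    have E3 : (C (φ u) : Polynomial (LaurentSeries K)) * C (φ d) = -(C t * C (φ w)) := by
      rw [← C_mul, e3, C_neg, C_mul]
    have lhs : C t * P = C (φ u) * X ^ N + C t * X ^ q + C (φ u) * X - C t * C (φ w) := by
      simp only [P]
      rw [← E1]
      ring
    have rhs : C (φ u) * G.map (φ : PowerSeries K →+* LaurentSeries K)
        = C (φ u) * X ^ N + C t * X ^ q + C (φ u) * X - C t * C (φ w) := by
      simp only [hG, Polynomial.map_add, Polynomial.map_mul, Polynomial.map_pow, map_C,
        Polynomial.map_X]
      rw [mul_add, mul_add, mul_add, ← mul_assoc, E2, E3]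
      ring
    rw [lhs, rhs]
  -- degree of P
  have ha0 : a ≠ 0 := by
    intro h
    have : φ u = 0 := by rw [← e1, h, mul_zero]
    have := hφinj (this.trans (map_zero φ).symm)
    exact huu.ne_zero this
  have hPdeg : P.degree = (N : WithBot ℕ) := by
    have hP' : P = C a * X ^ N + (C a * X + X ^ q - C (φ w)) := by ring
    rw [hP']
    rw [degree_add_eq_left_of_degree_lt, degree_C_mul_X_pow _ ha0]
    rw [degree_C_mul_X_pow _ ha0]
    have h1 : (C a * X + X ^ q - C (φ w) : Polynomial (LaurentSeries K)).degree
        ≤ (q : WithBot ℕ) := by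
      refine le_trans (degree_sub_le _ _) (max_le (le_trans (degree_add_le _ _)
        (max_le ?_ ?_)) ?_)
      · refine le_trans (degree_C_mul_X_le _) ?_
        exact_mod_cast Nat.one_le_cast.mpr (by omega)
      · exact degree_X_pow_le q |>.trans le_rfl
      · exact le_trans degree_C_le (by exact_mod_cast Nat.cast_nonneg q)
    exact lt_of_le_of_lt h1 (by exact_mod_cast hqN)
  have hP0 : P ≠ 0 := by
    intro h
    rw [h, degree_zero] at hPdeg
    exact (by simp : (⊥ : WithBot ℕ) ≠ (N : WithBot ℕ)) hPdeg
  have hPnat : P.natDegree = N := natDegree_eq_of_degree_eq_some hPdeg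
  -- separability of P
  have hqL : (q : LaurentSeries K) = 0 := by
    rw [← map_natCast (HahnSeries.C : K →+* LaurentSeries K) q, hqK, map_zero]
  have hNL : (N : LaurentSeries K) = 0 := by
    rw [← map_natCast (HahnSeries.C : K →+* LaurentSeries K) N, hNK, map_zero]
  have hPderiv : P.derivative = C a := by
    simp [P, derivative_X_pow, hqL, hNL, show r ≠ 0 by omega]
  have hPsep : P.Separable := by
    rw [Polynomial.separable_def, hPderiv]
    exact ⟨0, C a⁻¹, by simp [← C_mul, inv_mul_cancel₀ ha0]⟩
  have hPnodup : P.roots.Nodup := nodup_roots hPsep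
  -- the residue polynomial s over K
  set s : Polynomial K := X ^ N + X with hs
  have hsderiv : s.derivative = 1 := by
    simp [hs, derivative_X_pow, hNK]
  have hssep : s.Separable := by
    rw [Polynomial.separable_def, hsderiv]; exact isCoprime_one_right
  have hsdeg : s.degree = (N : WithBot ℕ) := by
    rw [hs, degree_add_eq_left_of_degree_lt, degree_X_pow]
    rw [degree_X_pow]
    exact lt_of_le_of_lt degree_X_le (by exact_mod_cast by omega)
  have hs0 : s ≠ 0 := by
    intro h
    rw [h, degree_zero] at hsdeg
    exact (by simp : (⊥ : WithBot ℕ) ≠ (N : WithBot ℕ)) hsdeg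
  have hsnat : s.natDegree = N := natDegree_eq_of_degree_eq_some hsdeg
  have hscard : Multiset.card s.roots = N := by
    rw [← hsnat]
    exact (splits_iff_card_roots.mp (IsAlgClosed.splits s))
  have hsnodup : s.roots.Nodup := nodup_roots hssep
  -- for each root α of s we get a root of P in the image of φ
  have key : ∀ α : K, ∃ y : PowerSeries K, α ∈ s.roots →
      P.IsRoot (φ y) ∧ PowerSeries.constantCoeff y = α := by
    intro α
    by_cases hα : α ∈ s.roots
    swap
    · exact ⟨0, fun h => absurd h hα⟩
    refine ?_
    have hαroot : α ^ N + α = 0 := by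
      have := (mem_roots hs0).mp hα
      simpa [hs, IsRoot] using this
    obtain ⟨y, hy, hcc⟩ := hensel_root q N hqN (by omega) hqK hNK b d hccb hccd α hαroot
    refine ⟨y, fun _ => ⟨?_, hcc⟩⟩
    have h1 : (C t * P).eval (φ y) = 0 := by
      rw [hPmul]
      rw [eval_mul, eval_C, eval_map, Polynomial.eval₂_hom]
      rw [show G.eval y = 0 from hy]
      simp
    rw [eval_mul, eval_C] at h1
    rcases mul_eq_zero.mp h1 with h | h
    · exact absurd h ht0
    · exact h
  choose F hF using key
  set Ψ : K → LaurentSeries K := fun α => φ (F α) with hΨ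
  set T : Finset K := s.roots.toFinset with hT
  have hTcard : T.card = N := by
    rw [hT, Multiset.toFinset_card_of_nodup hsnodup, hscard]
  have hinj : Set.InjOn Ψ T := by
    intro α hα β hβ hαβ
    have hα' : α ∈ s.roots := Multiset.mem_toFinset.mp hα
    have hβ' : β ∈ s.roots := Multiset.mem_toFinset.mp hβ
    have h1 := (hF α hα').2
    have h2 := (hF β hβ').2
    have : F α = F β := hφinj hαβ
    rw [← h1, ← h2, this]
  have himcard : (T.image Ψ).card = N := by
    rw [Finset.card_image_of_injOn hinj, hTcard]
  have hsub : T.image Ψ ⊆ P.roots.toFinset := by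
    intro y hy
    obtain ⟨α, hα, rfl⟩ := Finset.mem_image.mp hy
    have hα' : α ∈ s.roots := Multiset.mem_toFinset.mp hα
    exact Multiset.mem_toFinset.mpr ((mem_roots hP0).mpr (hF α hα').1)
  have hrootsFin : P.roots.toFinset.card = Multiset.card P.roots :=
    Multiset.toFinset_card_of_nodup hPnodup
  have hcard_le : Multiset.card P.roots ≤ N := hPnat ▸ card_roots' P
  have hN_le : N ≤ P.roots.toFinset.card := himcard ▸ Finset.card_le_card hsub
  have hcardroots : Multiset.card P.roots = N := le_antisymm hcard_le (hrootsFin ▸ hN_le)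
  constructor
  · exact splits_iff_card_roots.mpr (by rw [hcardroots, hPnat])
  · intro y hy
    have hy' : y ∈ P.roots.toFinset := Multiset.mem_toFinset.mpr ((mem_roots hP0).mpr hy)
    have heq : T.image Ψ = P.roots.toFinset := by
      apply Finset.eq_of_subset_of_card_le hsub
      rw [himcard, hrootsFin, hcardroots]
    rw [← heq] at hy'
    obtain ⟨α, hα, hαy⟩ := Finset.mem_image.mp hy'
    exact ⟨F α, hαy⟩


/-- Over `L = 𝔽̄_q((t))` with `T = t⁻¹`, every iterate `h^{∘k}` (`k ≥ 1`) of the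
division polynomial `h(Y) = (T−c)·Y + Y^q + (T−c)·Y^{q^r}` splits completely over `L`;
i.e. each splitting field `L_k = F_∞(φ[𝔭^k])` is unramified over `F_∞`. -/
theorem stmt_8 (p e q : ℕ) (hp : p.Prime) (he : 0 < e) (hq : q = p ^ e)
    (Fq : Type) [Field Fq] [Fintype Fq] (hcard : Fintype.card Fq = q)
    (r : ℕ) (hr : 2 ≤ r) (c : Fq)
    (t T : LaurentSeries (AlgebraicClosure Fq))
    (ht : t = HahnSeries.single (1 : ℤ) 1) (hT : T = t⁻¹)
    (h : Polynomial (LaurentSeries (AlgebraicClosure Fq)))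
    (hh : h = C (T - HahnSeries.C (algebraMap Fq (AlgebraicClosure Fq) c)) * X
      + X ^ q
      + C (T - HahnSeries.C (algebraMap Fq (AlgebraicClosure Fq) c)) * X ^ q ^ r) :
    ∀ k : ℕ, 1 ≤ k →
      ((fun g => g.comp h)^[k] X).Splits := by
  classical
  set φ := algebraMap (PowerSeries (AlgebraicClosure Fq)) (LaurentSeries (AlgebraicClosure Fq))
    with hφ
  set c' := algebraMap Fq (AlgebraicClosure Fq) c with hc'
  have hq2 : 2 ≤ q := by
    rw [hq]; exact Nat.one_lt_pow he.ne' hp.one_lt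
  have hqK : (q : AlgebraicClosure Fq) = 0 := by
    have h1 : (q : Fq) = 0 := by rw [← hcard]; exact FiniteField.cast_card_eq_zero Fq
    calc (q : AlgebraicClosure Fq) = algebraMap Fq (AlgebraicClosure Fq) (q : Fq) := (map_natCast _ q).symm
    _ = 0 := by rw [h1, map_zero]
  have ht0 : t ≠ 0 := by rw [ht]; exact HahnSeries.single_ne_zero one_ne_zero
  have hqrq : q < q ^ r := by
    calc q = q ^ 1 := (pow_one q).symm
    _ < q ^ r := Nat.pow_lt_pow_right (by omega) (by omega)
  -- the key lemma specialised
  have key : ∀ w : PowerSeries (AlgebraicClosure Fq), (h - C (φ w)).Splits ∧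
      ∀ y, (h - C (φ w)).IsRoot y → y ∈ Set.range φ := by
    intro w
    have hmain := splits_aux_s8 (AlgebraicClosure Fq) q r hq2 hr hqK c' w
    have hPeq : h - C (φ w) =
        C ((HahnSeries.single (1 : ℤ) (1 : AlgebraicClosure Fq))⁻¹ - HahnSeries.C c') * X + X ^ q
          + C ((HahnSeries.single (1 : ℤ) (1 : AlgebraicClosure Fq))⁻¹ - HahnSeries.C c') * X ^ q ^ r
          - C (φ w) := by
      rw [hh, hT, ht]
    rw [hPeq]
    exact hmain
  -- the leading coefficient is nonzero
  have ha0 : (T - HahnSeries.C c' : LaurentSeries (AlgebraicClosure Fq)) ≠ 0 := by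
    intro h0
    have e : t * (T - HahnSeries.C c') = 1 - HahnSeries.C c' * t := by
      rw [hT, mul_sub, mul_inv_cancel₀ ht0]; ring
    rw [h0, mul_zero] at e
    have e2 : (HahnSeries.C c' : LaurentSeries (AlgebraicClosure Fq)) * t = 1 := by
      linear_combination e
    rw [ht, HahnSeries.C_apply, HahnSeries.single_mul_single, mul_one, zero_add] at e2
    have e4 : ((HahnSeries.single (1 : ℤ) c' : LaurentSeries (AlgebraicClosure Fq))).coeff 0
        = (1 : LaurentSeries (AlgebraicClosure Fq)).coeff 0 := by rw [e2]
    rw [HahnSeries.coeff_single_of_ne (by norm_num), HahnSeries.coeff_one] at e4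
    simp at e4
  -- h has nonzero top coefficient
  have hcoefftop : h.coeff (q ^ r) = T - HahnSeries.C c' := by
    rw [hh]
    simp only [coeff_add, coeff_C_mul, coeff_X, coeff_X_pow]
    have hne1 : ¬((1 : ℕ) = q ^ r) := by
      intro hx; rw [← hx] at hqrq; omega
    have hne2 : ¬(q ^ r = q) := by
      intro hx; rw [hx] at hqrq; omega
    have hne3 : ¬(q ^ r = 1) := fun hx => hne1 hx.symm
    simp only [if_neg hne1, if_neg hne2, if_neg hne3, if_pos rfl, if_true]
    simp
  have hcompne : ∀ {H : Polynomial (LaurentSeries (AlgebraicClosure Fq))},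
      H ≠ 0 → H.comp h ≠ 0 := by
    intro H hH hc
    rcases comp_eq_zero_iff.mp hc with h1 | ⟨_, h2⟩
    · exact hH h1
    · have := congrArg (fun g => Polynomial.coeff g (q ^ r)) h2
      simp only [hcoefftop, coeff_C] at this
      rw [if_neg (by omega : ¬ q ^ r = 0)] at this
      exact ha0 this
  -- main induction
  have main : ∀ k : ℕ,
      ((fun g => g.comp h)^[k] X).Splits ∧
      (∀ y, ((fun g => g.comp h)^[k] X).IsRoot y → y ∈ Set.range φ) ∧
      ((fun g => g.comp h)^[k] X) ≠ 0 := by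
    intro k
    induction k with
    | zero =>
      refine ⟨Splits.X, ?_, X_ne_zero⟩
      intro y hy
      have : y = 0 := by simpa [IsRoot] using hy
      exact ⟨0, by rw [map_zero, this]⟩
    | succ k IH =>
      obtain ⟨hsp, hroots, hne⟩ := IH
      rw [Function.iterate_succ_apply']
      set H := (fun g => g.comp h)^[k] X with hH
      show (H.comp h).Splits ∧ (∀ y, (H.comp h).IsRoot y → y ∈ Set.range φ) ∧ H.comp h ≠ 0
      refine ⟨?_, ?_, hcompne hne⟩
      · have hfact := hsp.eq_prod_roots
        rw [show H.comp h = (C H.leadingCoeff * (H.roots.map fun z => X - C z).prod).comp h from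
          by rw [← hfact]]
        rw [mul_comp, C_comp, multiset_prod_comp]
        refine Splits.mul (Splits.C _) ?_
        refine Multiset.prod_induction _ _ (fun a b ha hb => Splits.mul ha hb)
          Splits.one ?_
        intro f hf
        rw [Multiset.map_map] at hf
        obtain ⟨z, hz, rfl⟩ := Multiset.mem_map.mp hf
        have hzr : H.IsRoot z := (mem_roots hne).mp hz
        obtain ⟨w, rfl⟩ := hroots z hzr
        show Splits ((X - C (φ w)).comp h)
        rw [sub_comp, X_comp, C_comp]
        exact (key w).1
      · intro y hy
        have h1 : H.eval (h.eval y) = 0 := by rwa [IsRoot, eval_comp] at hy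
        obtain ⟨w, hw⟩ := hroots _ h1
        refine (key w).2 y ?_
        rw [IsRoot, eval_sub, eval_C, hw, sub_self]
  intro k _
  exact (main k).1
end

section
/- Let q be a prime power, let f ∈ 𝔽_q[T] be a monic irreducible polynomial, let r ≥ 2 be an integer, let 𝔽̄_q be an algebraic closure of 𝔽_q, and let b ∈ 𝔽̄_q be an element with f(b) ≠ 0. Let L := 𝔽̄_q((s)) be the field of formal Laurent series over 𝔽̄_q, and set T := b + s ∈ L and p₁ := T·Y + Y^q + f(T)·Y^{q^r} ∈ L[Y]. Then for every polynomial a = Σ_i a_i T^i ∈ 𝔽_q[T] with a(b) ≠ 0, the polynomial φ_a := Σ_i a_i · p₁^{∘i} ∈ L[Y] splits completely over L, where p₁^{∘i} denotes i-fold composition (p₁^{∘0} = Y). -/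
open Polynomial

namespace Stmt9Aux

theorem ps_adic {K : Type*} [Field K] :
    IsAdicComplete (IsLocalRing.maximalIdeal (PowerSeries K)) (PowerSeries K) where
  haus' x hx := by
    simp only [← Ideal.one_eq_top, smul_eq_mul, mul_one, SModEq.zero,
      PowerSeries.maximalIdeal_eq_span_X, Ideal.span_singleton_pow,
      Ideal.mem_span_singleton, PowerSeries.X_pow_dvd_iff] at hx
    ext n
    simpa using hx (n+1) n (by omega)
  prec' x hx := by
    simp only [← Ideal.one_eq_top, smul_eq_mul, mul_one, SModEq.sub_mem,
      PowerSeries.maximalIdeal_eq_span_X, Ideal.span_singleton_pow,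
      Ideal.mem_span_singleton, PowerSeries.X_pow_dvd_iff] at hx ⊢
    refine ⟨PowerSeries.mk fun i => PowerSeries.coeff (R := K) i (x (i+1)), fun n i hi => ?_⟩
    have := @hx (i+1) n (by omega) i (by omega)
    simp only [map_sub, sub_eq_zero] at this ⊢
    rw [PowerSeries.coeff_mk, ← this]

theorem hensel_ps {K : Type*} [Field K] (f : Polynomial (PowerSeries K)) (hf : f.Monic)
    (a₀ : PowerSeries K)
    (h1 : PowerSeries.constantCoeff (R := K) (f.eval a₀) = 0)
    (h2 : PowerSeries.constantCoeff (R := K) (f.derivative.eval a₀) ≠ 0) :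
    ∃ a, f.IsRoot a ∧ PowerSeries.constantCoeff (R := K) a = PowerSeries.constantCoeff (R := K) a₀ := by
  have : IsAdicComplete (IsLocalRing.maximalIdeal (PowerSeries K)) (PowerSeries K) := ps_adic
  have H := (IsAdicComplete.henselianRing _ (IsLocalRing.maximalIdeal (PowerSeries K))).is_henselian
  have hmem : f.eval a₀ ∈ IsLocalRing.maximalIdeal (PowerSeries K) := by
    rw [← PowerSeries.ker_coeff_eq_max_ideal]; exact h1
  have hunit : IsUnit (Ideal.Quotient.mk (IsLocalRing.maximalIdeal (PowerSeries K))
      (f.derivative.eval a₀)) := by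
    have hnm : f.derivative.eval a₀ ∉ IsLocalRing.maximalIdeal (PowerSeries K) := by
      rw [← PowerSeries.ker_coeff_eq_max_ideal]; exact h2
    have hne : Ideal.Quotient.mk (IsLocalRing.maximalIdeal (PowerSeries K))
        (f.derivative.eval a₀) ≠ 0 := by
      simpa [Ideal.Quotient.eq_zero_iff_mem] using hnm
    letI : Field (PowerSeries K ⧸ IsLocalRing.maximalIdeal (PowerSeries K)) :=
      Ideal.Quotient.field _
    exact isUnit_iff_ne_zero.mpr hne
  obtain ⟨a, ha, hmem'⟩ := H f hf a₀ hmem hunit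
  refine ⟨a, ha, ?_⟩
  rw [← PowerSeries.ker_coeff_eq_max_ideal, RingHom.mem_ker, map_sub, sub_eq_zero] at hmem'
  exact hmem'

theorem key {K : Type*} [Field K] [IsAlgClosed K] :
    ∀ (n : ℕ) (P : Polynomial (PowerSeries K)), P.natDegree = n →
    IsUnit P.leadingCoeff → (P.map (PowerSeries.constantCoeff (R := K))).Separable →
    ∃ m : Multiset (PowerSeries K), Multiset.card m = n ∧
      P = C P.leadingCoeff * (m.map (fun α => X - C α)).prod := by
  intro n
  induction n using Nat.strong_induction_on with
  | _ n IH =>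
  intro P hdeg hunit hsep
  rcases Nat.eq_zero_or_pos n with hn | hn
  · subst hn
    refine ⟨0, rfl, ?_⟩
    rw [Multiset.map_zero, Multiset.prod_zero, mul_one, leadingCoeff, hdeg,
      ← eq_C_of_natDegree_eq_zero hdeg]
  have hlc0 : PowerSeries.constantCoeff (R := K) P.leadingCoeff ≠ 0 := by
    intro h
    have := (PowerSeries.isUnit_iff_constantCoeff.mp hunit)
    rw [h] at this
    exact this.ne_zero rfl
  set Pb := P.map (PowerSeries.constantCoeff (R := K)) with hPb
  have hdegb : Pb.natDegree = n := by
    rw [hPb, natDegree_map_of_leadingCoeff_ne_zero _ hlc0, hdeg]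
  have hPbne : Pb ≠ 0 := by
    intro h
    rw [h] at hdegb
    simp at hdegb
    omega
  obtain ⟨x, hx⟩ := IsAlgClosed.exists_root Pb (by
    rw [Polynomial.degree_eq_natDegree hPbne, hdegb]
    exact_mod_cast hn.ne')
  have hder : Pb.derivative.eval x ≠ 0 := by
    obtain ⟨u, v, huv⟩ := hsep
    intro h
    have hx' : Pb.eval x = 0 := hx
    have h3 := congrArg (Polynomial.eval x) huv
    rw [eval_add, eval_mul, eval_mul, hx', h, mul_zero, mul_zero, add_zero, eval_one] at h3
    exact one_ne_zero h3.symm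
  obtain ⟨u, hu⟩ := hunit
  set P₀ := C ((u⁻¹ : (PowerSeries K)ˣ) : PowerSeries K) * P with hP₀
  have hP₀P : C (u : PowerSeries K) * P₀ = P := by
    rw [hP₀, ← mul_assoc, ← C_mul, u.mul_inv, C_1, one_mul]
  have hmonic : P₀.Monic := by
    rw [Monic, hP₀, leadingCoeff_mul, leadingCoeff_C, ← hu, Units.inv_mul]
  set a₀ := PowerSeries.C (R := K) x with ha₀
  have hρa₀ : PowerSeries.constantCoeff (R := K) a₀ = x := PowerSeries.constantCoeff_C x
  have hevalcomm : ∀ (Q : Polynomial (PowerSeries K)) (a : PowerSeries K),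
      PowerSeries.constantCoeff (R := K) (Q.eval a)
        = (Q.map (PowerSeries.constantCoeff (R := K) : PowerSeries K →+* K)).eval
            (PowerSeries.constantCoeff (R := K) a) := by
    intro Q a
    rw [eval_map, eval₂_hom]
  have h1 : PowerSeries.constantCoeff (R := K) (P₀.eval a₀) = 0 := by
    rw [hevalcomm, hρa₀, hP₀, Polynomial.map_mul, map_C, eval_mul, eval_C, ← hPb, hx, mul_zero]
  have h2 : PowerSeries.constantCoeff (R := K) (P₀.derivative.eval a₀) ≠ 0 := by
    rw [hevalcomm, hρa₀, hP₀, derivative_C_mul, Polynomial.map_mul, map_C, eval_mul, eval_C,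
      ← derivative_map, ← hPb]
    exact mul_ne_zero (by
      intro h
      have : IsUnit ((u⁻¹ : (PowerSeries K)ˣ) : PowerSeries K) := (u⁻¹).isUnit
      exact ((PowerSeries.isUnit_iff_constantCoeff.mp this).ne_zero) h) hder
  obtain ⟨α, hα, -⟩ := hensel_ps P₀ hmonic a₀ h1 h2
  have hαP : P.IsRoot α := by
    rw [IsRoot, ← hP₀P, eval_mul, hα, mul_zero]
  obtain ⟨Q, hQ⟩ := dvd_iff_isRoot.mpr hαP
  have hQne : Q ≠ 0 := by
    rintro rfl
    rw [mul_zero] at hQ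
    rw [hQ] at hdeg
    simp at hdeg
    omega
  have hXα : (X - C α : Polynomial (PowerSeries K)) ≠ 0 := X_sub_C_ne_zero α
  have hlcQ : Q.leadingCoeff = P.leadingCoeff := by
    rw [hQ, leadingCoeff_mul, leadingCoeff_X_sub_C, one_mul]
  have hdegQ : Q.natDegree = n - 1 := by
    have := hdeg
    rw [hQ, natDegree_mul hXα hQne, natDegree_X_sub_C] at this
    omega
  have hQb : (Q.map (PowerSeries.constantCoeff (R := K) : PowerSeries K →+* K)).Separable := by
    have hfac : Pb = (X - C (PowerSeries.constantCoeff (R := K) α))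
        * Q.map (PowerSeries.constantCoeff (R := K) : PowerSeries K →+* K) := by
      rw [hPb, hQ, Polynomial.map_mul, Polynomial.map_sub, map_X, map_C]
    rw [hfac] at hsep
    exact hsep.of_mul_right
  obtain ⟨m, hcard, hfact⟩ := IH (n-1) (by omega) Q hdegQ
    (by rw [hlcQ, ← hu]; exact u.isUnit) hQb
  refine ⟨α ::ₘ m, by rw [Multiset.card_cons, hcard]; omega, ?_⟩
  calc P = (X - C α) * Q := hQ
    _ = (X - C α) * (C P.leadingCoeff * (Multiset.map (fun α => X - C α) m).prod) := by
        rw [hfact, hlcQ]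
    _ = C P.leadingCoeff * (Multiset.map (fun α => X - C α) (α ::ₘ m)).prod := by
        rw [Multiset.map_cons, Multiset.prod_cons]; ring

end Stmt9Aux

/-- Good reduction / unramifiedness of torsion away from `𝔭 = (f)`: over the Laurent
series field `L = 𝔽̄_q((s))` with `T = b + s`, where `f(b) ≠ 0`, every division
polynomial `φ_a = Σ_i a_i·p₁^{∘i}` with `a(b) ≠ 0` of the Drinfeld module
`p₁ = T·Y + Y^q + f(T)·Y^{q^r}` splits completely over `L`. -/
theorem stmt_9 (p k q : ℕ) (hp : p.Prime) (hk : 0 < k) (hq : q = p ^ k)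
    (Fq : Type) [Field Fq] [Fintype Fq] (hcard : Fintype.card Fq = q)
    (f : Polynomial Fq) (hmonic : f.Monic) (hirr : Irreducible f)
    (r : ℕ) (hr : 2 ≤ r)
    (b : AlgebraicClosure Fq) (hb : Polynomial.aeval b f ≠ 0)
    (T : LaurentSeries (AlgebraicClosure Fq))
    (hT : T = HahnSeries.C b + HahnSeries.single (1 : ℤ) 1)
    (p₁ : Polynomial (LaurentSeries (AlgebraicClosure Fq)))
    (hp₁ : p₁ = C T * X + X ^ q
      + C (Polynomial.eval₂
          ((HahnSeries.C : (AlgebraicClosure Fq) →+* LaurentSeries (AlgebraicClosure Fq)).comp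
            (algebraMap Fq (AlgebraicClosure Fq))) T f) * X ^ q ^ r) :
    ∀ a : Polynomial Fq, Polynomial.aeval b a ≠ 0 →
      ((∑ j ∈ Finset.range (a.natDegree + 1),
        C (HahnSeries.C (algebraMap Fq (AlgebraicClosure Fq) (a.coeff j)))
          * ((fun g : Polynomial (LaurentSeries (AlgebraicClosure Fq)) => g.comp p₁)^[j] X)).map
        (RingHom.id (LaurentSeries (AlgebraicClosure Fq)))).Splits := by
  intro a ha
  -- notation
  set ι : PowerSeries (AlgebraicClosure Fq) →+* LaurentSeries (AlgebraicClosure Fq) := HahnSeries.ofPowerSeries ℤ (AlgebraicClosure Fq) with hι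
  set ρ : PowerSeries (AlgebraicClosure Fq) →+* (AlgebraicClosure Fq) := PowerSeries.constantCoeff (R := AlgebraicClosure Fq) with hρ
  set TA : PowerSeries (AlgebraicClosure Fq) := PowerSeries.C (R := AlgebraicClosure Fq) b + PowerSeries.X with hTA
  set fTA : PowerSeries (AlgebraicClosure Fq) :=
    Polynomial.eval₂ ((PowerSeries.C (R := AlgebraicClosure Fq)).comp (algebraMap Fq (AlgebraicClosure Fq))) TA f with hfTA
  set PA : Polynomial (PowerSeries (AlgebraicClosure Fq)) := C TA * X + X ^ q + C fTA * X ^ q ^ r with hPA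
  -- numerics
  have h2q : 2 ≤ q := by
    rw [hq]
    calc 2 ≤ p := hp.two_le
      _ ≤ p ^ k := Nat.le_self_pow hk.ne' p
  have hqr : q < q ^ r := by
    calc q = q ^ 1 := (pow_one q).symm
      _ < q ^ r := Nat.pow_lt_pow_right (by omega) (by omega)
  have h1qr : 1 < q ^ r := by omega
  -- characteristic facts
  have hqFq : ((q : ℕ) : Fq) = 0 := by rw [← hcard]; exact FiniteField.cast_card_eq_zero Fq
  have hqk : ((q : ℕ) : (AlgebraicClosure Fq)) = 0 := by
    rw [← map_natCast (algebraMap Fq (AlgebraicClosure Fq)), hqFq, map_zero]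
  have hqA : ((q : ℕ) : PowerSeries (AlgebraicClosure Fq)) = 0 := by
    rw [← map_natCast (PowerSeries.C (R := AlgebraicClosure Fq)), hqk, map_zero]
  have hqrA : ((q ^ r : ℕ) : PowerSeries (AlgebraicClosure Fq)) = 0 := by
    push_cast
    rw [hqA]
    exact zero_pow (by omega)
  -- constant coefficients
  have hρT : ρ TA = b := by
    rw [hTA, hρ, map_add, PowerSeries.constantCoeff_C, PowerSeries.constantCoeff_X, add_zero]
  have hρf : ρ fTA = Polynomial.aeval b f := by
    rw [hfTA, hρ, hom_eval₂]
    have hcomp : (PowerSeries.constantCoeff (R := AlgebraicClosure Fq)).comp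
        ((PowerSeries.C (R := AlgebraicClosure Fq)).comp (algebraMap Fq (AlgebraicClosure Fq))) = algebraMap Fq (AlgebraicClosure Fq) := by
      ext x
      simp [PowerSeries.constantCoeff_C]
    rw [hcomp, ← hρ, hρT, aeval_def]
  have hρfne : ρ fTA ≠ 0 := by rw [hρf]; exact hb
  have hfne : fTA ≠ 0 := by intro h; rw [h, map_zero] at hρfne; exact hρfne rfl
  -- derivative of PA
  have hderP : derivative PA = C TA := by
    rw [hPA]
    simp [derivative_X_pow, hqA, hqrA]
  -- degree and leading coefficient of PA
  have hlowdeg : (C TA * X + X ^ q : Polynomial (PowerSeries (AlgebraicClosure Fq))).natDegree ≤ q := by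
    refine (natDegree_add_le _ _).trans ?_
    simp only [natDegree_X_pow, max_le_iff, le_refl, and_true]
    exact (natDegree_C_mul_le _ _).trans (by rw [natDegree_X]; omega)
  have htopdeg : (C fTA * X ^ q ^ r : Polynomial (PowerSeries (AlgebraicClosure Fq))).natDegree = q ^ r := by
    rw [natDegree_C_mul hfne, natDegree_X_pow]
  have htopne : (C fTA * X ^ q ^ r : Polynomial (PowerSeries (AlgebraicClosure Fq))) ≠ 0 := by
    intro h
    rw [h] at htopdeg
    simp at htopdeg
    omega
  have hPAdeg : PA.natDegree = q ^ r := by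
    rw [hPA, natDegree_add_eq_right_of_natDegree_lt
      (by rw [htopdeg]; exact lt_of_le_of_lt hlowdeg hqr), htopdeg]
  have hPAlc : PA.leadingCoeff = fTA := by
    have hdlt : (C TA * X + X ^ q : Polynomial (PowerSeries (AlgebraicClosure Fq))).degree
        < (C fTA * X ^ q ^ r : Polynomial (PowerSeries (AlgebraicClosure Fq))).degree := by
      refine lt_of_le_of_lt (degree_le_natDegree) ?_
      rw [degree_eq_natDegree htopne, htopdeg]
      exact_mod_cast lt_of_le_of_lt hlowdeg hqr
    rw [hPA, leadingCoeff_add_of_degree_lt hdlt, leadingCoeff_mul, leadingCoeff_C,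
      leadingCoeff_X_pow, mul_one]
  -- iterates of composition with PA
  have hiter : ∀ j : ℕ,
      ((fun g : Polynomial (PowerSeries (AlgebraicClosure Fq)) => g.comp PA)^[j] X).natDegree
          = (q ^ r) ^ j
      ∧ ρ (((fun g : Polynomial (PowerSeries (AlgebraicClosure Fq)) =>
            g.comp PA)^[j] X).leadingCoeff) ≠ 0
      ∧ derivative ((fun g : Polynomial (PowerSeries (AlgebraicClosure Fq)) => g.comp PA)^[j] X)
          = C (TA ^ j) := by
    intro j
    induction j with
    | zero => simp
    | succ j ih =>
      obtain ⟨ih1, ih2, ih3⟩ := ih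
      rw [Function.iterate_succ_apply']
      refine ⟨?_, ?_, ?_⟩
      · rw [natDegree_comp, ih1, hPAdeg, pow_succ]
      · rw [leadingCoeff_comp (by rw [hPAdeg]; omega), map_mul, map_pow, hPAlc]
        exact mul_ne_zero ih2 (pow_ne_zero _ hρfne)
      · rw [derivative_comp, ih3, hderP, C_comp, ← C_mul, ← pow_succ']
  -- the division polynomial over the power series ring
  set SA : Polynomial (PowerSeries (AlgebraicClosure Fq)) :=
    ∑ j ∈ Finset.range (a.natDegree + 1),
      C (PowerSeries.C (R := AlgebraicClosure Fq) (algebraMap Fq (AlgebraicClosure Fq) (a.coeff j)))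
        * ((fun g : Polynomial (PowerSeries (AlgebraicClosure Fq)) => g.comp PA)^[j] X)
    with hSA
  have hane : a ≠ 0 := by rintro rfl; simp at ha
  have hcn : a.coeff a.natDegree ≠ 0 := by
    intro h
    apply hane
    apply leadingCoeff_eq_zero.mp
    rwa [leadingCoeff]
  have hcnκ : algebraMap Fq (AlgebraicClosure Fq) (a.coeff a.natDegree) ≠ 0 :=
    fun h => hcn ((_root_.map_eq_zero _).mp h)
  have hcnρ : ρ (PowerSeries.C (R := AlgebraicClosure Fq)
      (algebraMap Fq (AlgebraicClosure Fq) (a.coeff a.natDegree))) ≠ 0 := by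
    rw [hρ, PowerSeries.constantCoeff_C]; exact hcnκ
  have hcnA : PowerSeries.C (R := AlgebraicClosure Fq)
      (algebraMap Fq (AlgebraicClosure Fq) (a.coeff a.natDegree)) ≠ 0 := by
    intro h
    rw [h, map_zero] at hcnρ
    exact hcnρ rfl
  -- the top term
  have htopSdeg : (C (PowerSeries.C (R := AlgebraicClosure Fq)
        (algebraMap Fq (AlgebraicClosure Fq) (a.coeff a.natDegree)))
      * ((fun g : Polynomial (PowerSeries (AlgebraicClosure Fq)) =>
          g.comp PA)^[a.natDegree] X)).natDegree = (q ^ r) ^ a.natDegree := by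
    rw [natDegree_C_mul hcnA, (hiter a.natDegree).1]
  have htopSne : (C (PowerSeries.C (R := AlgebraicClosure Fq)
        (algebraMap Fq (AlgebraicClosure Fq) (a.coeff a.natDegree)))
      * ((fun g : Polynomial (PowerSeries (AlgebraicClosure Fq)) =>
          g.comp PA)^[a.natDegree] X)) ≠ 0 := by
    intro h
    have h2 := congrArg (fun P : Polynomial (PowerSeries (AlgebraicClosure Fq)) =>
      ρ P.leadingCoeff) h
    simp only [leadingCoeff_mul, leadingCoeff_C, map_mul, leadingCoeff_zero, map_zero] at h2
    exact (mul_ne_zero hcnρ (hiter a.natDegree).2.1) h2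
  have hfrontdeg : (∑ j ∈ Finset.range a.natDegree,
      C (PowerSeries.C (R := AlgebraicClosure Fq) (algebraMap Fq (AlgebraicClosure Fq) (a.coeff j)))
        * ((fun g : Polynomial (PowerSeries (AlgebraicClosure Fq)) =>
            g.comp PA)^[j] X)).natDegree ≤ (q ^ r) ^ a.natDegree - 1 := by
    refine natDegree_sum_le_of_forall_le _ _ ?_
    intro j hj
    refine (natDegree_C_mul_le _ _).trans ?_
    rw [(hiter j).1]
    have : (q ^ r) ^ j < (q ^ r) ^ a.natDegree :=
      Nat.pow_lt_pow_right h1qr (Finset.mem_range.mp hj)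
    omega
  have hpowpos : 0 < (q ^ r) ^ a.natDegree := Nat.pow_pos (by omega)
  have hsplit : SA = (∑ j ∈ Finset.range a.natDegree,
      C (PowerSeries.C (R := AlgebraicClosure Fq) (algebraMap Fq (AlgebraicClosure Fq) (a.coeff j)))
        * ((fun g : Polynomial (PowerSeries (AlgebraicClosure Fq)) => g.comp PA)^[j] X))
      + C (PowerSeries.C (R := AlgebraicClosure Fq)
          (algebraMap Fq (AlgebraicClosure Fq) (a.coeff a.natDegree)))
        * ((fun g : Polynomial (PowerSeries (AlgebraicClosure Fq)) =>
            g.comp PA)^[a.natDegree] X) := by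
    rw [hSA, Finset.sum_range_succ]
  have hSAlc : SA.leadingCoeff = PowerSeries.C (R := AlgebraicClosure Fq)
      (algebraMap Fq (AlgebraicClosure Fq) (a.coeff a.natDegree))
      * ((fun g : Polynomial (PowerSeries (AlgebraicClosure Fq)) =>
          g.comp PA)^[a.natDegree] X).leadingCoeff := by
    rw [hsplit, leadingCoeff_add_of_degree_lt, leadingCoeff_mul, leadingCoeff_C]
    refine lt_of_le_of_lt (degree_le_natDegree) ?_
    rw [degree_eq_natDegree htopSne, htopSdeg]
    exact_mod_cast lt_of_le_of_lt hfrontdeg (by omega)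
  have hSAunit : IsUnit SA.leadingCoeff := by
    rw [PowerSeries.isUnit_iff_constantCoeff, hSAlc, map_mul]
    refine (mul_ne_zero hcnρ (hiter a.natDegree).2.1).isUnit
  -- derivative of SA
  have hρC : ∀ y : AlgebraicClosure Fq, ρ (PowerSeries.C (R := AlgebraicClosure Fq) y) = y :=
    fun y => PowerSeries.constantCoeff_C y
  have hSAder : derivative SA = C (∑ j ∈ Finset.range (a.natDegree + 1),
      PowerSeries.C (R := AlgebraicClosure Fq) (algebraMap Fq (AlgebraicClosure Fq) (a.coeff j))
        * TA ^ j) := by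
    rw [hSA, derivative_sum, map_sum]
    refine Finset.sum_congr rfl ?_
    intro j _
    rw [derivative_C_mul, (hiter j).2.2, ← C_mul]
  have hval : ρ (∑ j ∈ Finset.range (a.natDegree + 1),
      PowerSeries.C (R := AlgebraicClosure Fq) (algebraMap Fq (AlgebraicClosure Fq) (a.coeff j))
        * TA ^ j) = Polynomial.aeval b a := by
    rw [map_sum]
    have h1 : ∀ j ∈ Finset.range (a.natDegree + 1),
        ρ (PowerSeries.C (R := AlgebraicClosure Fq) (algebraMap Fq (AlgebraicClosure Fq) (a.coeff j))
          * TA ^ j) = algebraMap Fq (AlgebraicClosure Fq) (a.coeff j) * b ^ j := by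
      intro j _
      rw [map_mul, map_pow, hρT, hρC]
    rw [Finset.sum_congr rfl h1, aeval_eq_sum_range]
    refine Finset.sum_congr rfl ?_
    intro j _
    rw [Algebra.smul_def]
  have hsep : (SA.map (ρ : PowerSeries (AlgebraicClosure Fq) →+* AlgebraicClosure Fq)).Separable := by
    have hd : derivative (SA.map (ρ : PowerSeries (AlgebraicClosure Fq) →+* AlgebraicClosure Fq))
        = C (Polynomial.aeval b a) := by
      rw [derivative_map, hSAder, map_C, hval]
    refine ⟨0, C (Polynomial.aeval b a)⁻¹, ?_⟩
    rw [hd, zero_mul, zero_add, ← C_mul, inv_mul_cancel₀ ha, C_1]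
  -- factor SA over the power series ring
  obtain ⟨m, hmcard, hfact⟩ := Stmt9Aux.key SA.natDegree SA rfl hSAunit hsep
  -- transport along ι
  have hιT : ι TA = T := by
    rw [hTA, hT, hι, map_add, HahnSeries.ofPowerSeries_C, HahnSeries.ofPowerSeries_X]
  have hιf : ι fTA = Polynomial.eval₂
      ((HahnSeries.C : (AlgebraicClosure Fq) →+* LaurentSeries (AlgebraicClosure Fq)).comp
        (algebraMap Fq (AlgebraicClosure Fq))) T f := by
    rw [hfTA, hom_eval₂, hιT]
    congr 1
    ext y
    simp only [RingHom.comp_apply, hι, HahnSeries.ofPowerSeries_C]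
  have hPAmap : PA.map (ι : PowerSeries (AlgebraicClosure Fq) →+* LaurentSeries (AlgebraicClosure Fq)) = p₁ := by
    rw [hPA, hp₁]
    simp only [Polynomial.map_add, Polynomial.map_mul, Polynomial.map_pow, map_C, map_X,
      hιT, hιf]
  have hmapiter : ∀ j : ℕ,
      (((fun g : Polynomial (PowerSeries (AlgebraicClosure Fq)) => g.comp PA)^[j] X)).map
        (ι : PowerSeries (AlgebraicClosure Fq) →+* LaurentSeries (AlgebraicClosure Fq))
      = (fun g : Polynomial (LaurentSeries (AlgebraicClosure Fq)) => g.comp p₁)^[j] X := by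
    intro j
    induction j with
    | zero => simp
    | succ j ih =>
      rw [Function.iterate_succ_apply', Function.iterate_succ_apply', Polynomial.map_comp,
        ih, hPAmap]
  have hmapSA : SA.map (ι : PowerSeries (AlgebraicClosure Fq) →+* LaurentSeries (AlgebraicClosure Fq))
      = ∑ j ∈ Finset.range (a.natDegree + 1),
        C (HahnSeries.C (algebraMap Fq (AlgebraicClosure Fq) (a.coeff j)))
          * ((fun g : Polynomial (LaurentSeries (AlgebraicClosure Fq)) => g.comp p₁)^[j] X) := by
    rw [hSA, Polynomial.map_sum]
    refine Finset.sum_congr rfl ?_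
    intro j _
    rw [Polynomial.map_mul, map_C, hmapiter j, hι, HahnSeries.ofPowerSeries_C]
  rw [← hmapSA]
  -- conclude splitting
  have hlcne : (ι : PowerSeries (AlgebraicClosure Fq) →+* LaurentSeries (AlgebraicClosure Fq))
      SA.leadingCoeff ≠ 0 := by
    intro h
    have h0 : SA.leadingCoeff = 0 := by
      apply HahnSeries.ofPowerSeries_injective (Γ := ℤ)
      rw [← hι, h, map_zero]
    exact hSAunit.ne_zero h0
  have hprodmap : ((Multiset.map (fun α => X - C α) m).prod).map
        (ι : PowerSeries (AlgebraicClosure Fq) →+* LaurentSeries (AlgebraicClosure Fq))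
      = (Multiset.map (fun α => X - C ((ι : PowerSeries (AlgebraicClosure Fq) →+*
          LaurentSeries (AlgebraicClosure Fq)) α)) m).prod := by
    rw [← Polynomial.coe_mapRingHom, map_multiset_prod, Multiset.map_map]
    refine congrArg Multiset.prod (Multiset.map_congr rfl ?_)
    intro α _
    simp only [Function.comp_apply, Polynomial.coe_mapRingHom, Polynomial.map_sub, map_X, map_C]
  rw [Polynomial.map_id, splits_iff_exists_multiset]
  refine ⟨m.map (ι : PowerSeries (AlgebraicClosure Fq) →+* LaurentSeries (AlgebraicClosure Fq)), ?_⟩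
  have hlcmap : (SA.map (ι : PowerSeries (AlgebraicClosure Fq) →+*
      LaurentSeries (AlgebraicClosure Fq))).leadingCoeff = ι SA.leadingCoeff :=
    leadingCoeff_map_of_leadingCoeff_ne_zero _ hlcne
  rw [hlcmap]
  conv_lhs => rw [hfact]
  rw [Polynomial.map_mul, map_C, hprodmap, Multiset.map_map]
  rfl
end
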